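/- Integral representation of the Wilcoxon rank-sum estimand: Let T_1 and T_2 be independent random variables with values in (0, infinity), with survival functions S_1 and S_2 respectively. Then P(T_1 < T_2) + (1/2) P(T_1 = T_2) = 1 + integral over (0, infinity) of Š_1(t) dS_2(t), where Š_1(t) = (S_1(t) + S_1(t-))/2. -/

import Mathlib

open MeasureTheory ProbabilityTheory Set Function Filter Topology

/-- Left limit of the survival function of a finite measure. -/
lemma survival_leftLim (ν : Measure ℝ) [IsFiniteMeasure ν] (t : ℝ) :
    Function.leftLim (fun s => (ν (Set.Ioi s)).toReal) t = (ν (Set.Ici t)).toReal := by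
  set f : ℝ → ℝ := fun s => (ν (Set.Ioi s)).toReal with hf
  have hanti : Antitone f := fun a b hab =>
    ENNReal.toReal_mono (measure_ne_top _ _) (measure_mono (Ioi_subset_Ioi hab))
  set u : ℕ → ℝ := fun n => t - 1 / (n + 1) with hu
  have hpos : ∀ n : ℕ, (0 : ℝ) < 1 / (n + 1) := fun n => by positivity
  have hul : ∀ n, u n < t := fun n => by
    have := hpos n; simp only [hu]; linarith
  have hut : Tendsto u atTop (𝓝 t) := by
    have h0 : Tendsto (fun n : ℕ => 1 / ((n : ℝ) + 1)) atTop (𝓝 0) :=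
      tendsto_one_div_add_atTop_nhds_zero_nat
    have := (tendsto_const_nhds (x := t) (f := (atTop : Filter ℕ))).sub h0
    simpa [hu, one_div] using this
  have hut' : Tendsto u atTop (𝓝[<] t) :=
    tendsto_nhdsWithin_of_tendsto_nhds_of_eventually_within _ hut
      (Filter.Eventually.of_forall hul)
  have h1 : Tendsto (f ∘ u) atTop (𝓝 (Function.leftLim f t)) :=
    (hanti.tendsto_leftLim t).comp hut'
  have hiInt : ⋂ n, Set.Ioi (u n) = Set.Ici t := by
    ext x
    simp only [Set.mem_iInter, Set.mem_Ioi, Set.mem_Ici]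
    constructor
    · intro h
      by_contra hx
      push_neg at hx
      obtain ⟨n, hn⟩ := exists_nat_one_div_lt (sub_pos.mpr hx)
      have hh := h n
      simp only [hu] at hh
      linarith
    · intro h n
      exact lt_of_lt_of_le (hul n) h
  have humono : Monotone u := fun n m hnm => by
    simp only [hu]
    have : (1 : ℝ) / (m + 1) ≤ 1 / (n + 1) := by
      apply one_div_le_one_div_of_le (by positivity)
      exact_mod_cast by omega
    linarith
  have h2' : Tendsto (fun n => ν (Set.Ioi (u n))) atTop (𝓝 (ν (Set.Ici t))) := by
    have := tendsto_measure_iInter_atTop (μ := ν) (s := fun n => Set.Ioi (u n))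
      (fun n => measurableSet_Ioi.nullMeasurableSet)
      (fun n m hnm => Ioi_subset_Ioi (humono hnm))
      ⟨0, measure_ne_top _ _⟩
    rwa [hiInt] at this
  have h2 : Tendsto (f ∘ u) atTop (𝓝 ((ν (Set.Ici t)).toReal)) :=
    (ENNReal.tendsto_toReal (measure_ne_top _ _)).comp h2'
  exact tendsto_nhds_unique h1 h2

/-- **Integral representation of the Wilcoxon rank-sum estimand.**
`T₁` and `T₂` are independent random variables with values in `(0, ∞)`, with survival
functions `S₁` and `S₂`.  `μ₂` is the (nonnegative) Lebesgue–Stieltjes measure generated by the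
nonincreasing right-continuous function `S₂`, i.e. the negative of the Stieltjes measure `dS₂`;
thus `∫ f dS₂ = - ∫ f ∂μ₂`.  The claim is
`P(T₁ < T₂) + (1/2) P(T₁ = T₂) = 1 + ∫_{(0,∞)} Š₁ dS₂` where `Š₁(t) = (S₁(t) + S₁(t-))/2`. -/
theorem wilcoxon_integral_representation
    {Ω : Type*} [MeasurableSpace Ω] (P : Measure Ω) [IsProbabilityMeasure P]
    (T₁ T₂ : Ω → ℝ) (hT₁ : Measurable T₁) (hT₂ : Measurable T₂)
    (hpos₁ : ∀ ω, 0 < T₁ ω) (hpos₂ : ∀ ω, 0 < T₂ ω)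
    (hindep : IndepFun T₁ T₂ P)
    (S₁ S₂ : ℝ → ℝ)
    (hS₁ : ∀ t, S₁ t = (P {ω | t < T₁ ω}).toReal)
    (hS₂ : ∀ t, S₂ t = (P {ω | t < T₂ ω}).toReal)
    (μ₂ : Measure ℝ)
    (hμ₂ : ∀ a b : ℝ, a ≤ b → μ₂ (Set.Ioc a b) = ENNReal.ofReal (S₂ a - S₂ b)) :
    (P {ω | T₁ ω < T₂ ω}).toReal + (1 / 2) * (P {ω | T₁ ω = T₂ ω}).toReal
      = 1 + -∫ t in Set.Ioi (0 : ℝ), (S₁ t + Function.leftLim S₁ t) / 2 ∂μ₂ := by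
  set ν₁ := P.map T₁ with hν₁
  set ν₂ := P.map T₂ with hν₂
  have i1 : IsProbabilityMeasure ν₁ := Measure.isProbabilityMeasure_map hT₁.aemeasurable
  have i2 : IsProbabilityMeasure ν₂ := Measure.isProbabilityMeasure_map hT₂.aemeasurable
  have hS₁' : ∀ t, S₁ t = (ν₁ (Set.Ioi t)).toReal := fun t => by
    rw [hS₁, hν₁, Measure.map_apply hT₁ measurableSet_Ioi]; rfl
  have hS₂' : ∀ t, S₂ t = (ν₂ (Set.Ioi t)).toReal := fun t => by
    rw [hS₂, hν₂, Measure.map_apply hT₂ measurableSet_Ioi]; rfl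
  have hS₁fun : S₁ = fun s => (ν₁ (Set.Ioi s)).toReal := funext hS₁'
  set G : ℝ → ℝ := fun t => (ν₁ (Set.Ici t)).toReal with hG
  have hLL : ∀ t, Function.leftLim S₁ t = G t := fun t => by
    rw [hS₁fun]; exact survival_leftLim ν₁ t
  -- μ₂ agrees with the law of T₂
  have hν₂Ioc : ∀ l u : ℝ, l ≤ u → ν₂ (Set.Ioc l u) = ENNReal.ofReal (S₂ l - S₂ u) := by
    intro l u h
    have hsub : Set.Ioi u ⊆ Set.Ioi l := Ioi_subset_Ioi h
    have h0 : (0 : ℝ) ≤ S₂ u := by rw [hS₂']; exact ENNReal.toReal_nonneg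
    rw [← Set.Ioi_diff_Ioi,
      measure_diff hsub measurableSet_Ioi.nullMeasurableSet (measure_ne_top _ _),
      hS₂' l, hS₂' u, ENNReal.ofReal_sub _ ENNReal.toReal_nonneg,
      ENNReal.ofReal_toReal (measure_ne_top _ _), ENNReal.ofReal_toReal (measure_ne_top _ _)]
  have hμν : μ₂ = ν₂ := by
    refine Measure.ext_of_Ioc' μ₂ ν₂ (fun a b hab => ?_) (fun a b hab => ?_)
    · rw [hμ₂ a b hab.le]; exact ENNReal.ofReal_ne_top
    · rw [hμ₂ a b hab.le, hν₂Ioc a b hab.le]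
  -- independence and Fubini
  have hmap : P.map (fun ω => (T₁ ω, T₂ ω)) = ν₁.prod ν₂ :=
    (ProbabilityTheory.indepFun_iff_map_prod_eq_prod_map_map hT₁.aemeasurable
      hT₂.aemeasurable).mp hindep
  have hC : P {ω | T₂ ω < T₁ ω} = ∫⁻ y, ν₁ (Set.Ioi y) ∂ν₂ := by
    have hset : MeasurableSet {p : ℝ × ℝ | p.2 < p.1} :=
      measurableSet_lt measurable_snd measurable_fst
    have h1 : P {ω | T₂ ω < T₁ ω} = (P.map (fun ω => (T₁ ω, T₂ ω))) {p | p.2 < p.1} := by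
      rw [Measure.map_apply (hT₁.prodMk hT₂) hset]; rfl
    rw [h1, hmap, Measure.prod_apply_symm hset]
    rfl
  have hD : P {ω | T₂ ω ≤ T₁ ω} = ∫⁻ y, ν₁ (Set.Ici y) ∂ν₂ := by
    have hset : MeasurableSet {p : ℝ × ℝ | p.2 ≤ p.1} :=
      measurableSet_le measurable_snd measurable_fst
    have h1 : P {ω | T₂ ω ≤ T₁ ω} = (P.map (fun ω => (T₁ ω, T₂ ω))) {p | p.2 ≤ p.1} := by
      rw [Measure.map_apply (hT₁.prodMk hT₂) hset]; rfl
    rw [h1, hmap, Measure.prod_apply_symm hset]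
    rfl
  -- measurability, bounds, integrability
  have hantiS₁ : Antitone S₁ := fun a b hab => by
    rw [hS₁' a, hS₁' b]
    exact ENNReal.toReal_mono (measure_ne_top _ _) (measure_mono (Ioi_subset_Ioi hab))
  have hantiG : Antitone G := fun a b hab =>
    ENNReal.toReal_mono (measure_ne_top _ _) (measure_mono (Set.Ici_subset_Ici.mpr hab))
  have hb1 : ∀ s : Set ℝ, (ν₁ s).toReal ≤ 1 := fun s =>
    le_trans (ENNReal.toReal_mono (measure_ne_top _ _) (measure_mono (subset_univ _)))
      (by simp)
  have hintf : ∀ f : ℝ → ℝ, Measurable f → (∀ y, 0 ≤ f y) → (∀ y, f y ≤ 1) →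
      Integrable f ν₂ := fun f hm h0 h1 =>
    (integrable_const (1 : ℝ)).mono' hm.aestronglyMeasurable
      (Filter.Eventually.of_forall fun y => by
        rw [Real.norm_eq_abs, abs_of_nonneg (h0 y)]; exact h1 y)
  have hS₁0 : ∀ y, 0 ≤ S₁ y := fun y => by rw [hS₁']; exact ENNReal.toReal_nonneg
  have hS₁1 : ∀ y, S₁ y ≤ 1 := fun y => by rw [hS₁']; exact hb1 _
  have hG0 : ∀ y, 0 ≤ G y := fun y => ENNReal.toReal_nonneg
  have hG1 : ∀ y, G y ≤ 1 := fun y => hb1 _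
  have intS₁ : Integrable S₁ ν₂ := hintf S₁ hantiS₁.measurable hS₁0 hS₁1
  have intG : Integrable G ν₂ := hintf G hantiG.measurable hG0 hG1
  -- identification of the two integrals
  have hIS₁ : ∫ y, S₁ y ∂ν₂ = (P {ω | T₂ ω < T₁ ω}).toReal := by
    rw [integral_eq_lintegral_of_nonneg_ae (Filter.Eventually.of_forall hS₁0)
      hantiS₁.measurable.aestronglyMeasurable]
    congr 1
    rw [hC]
    exact lintegral_congr fun y => by
      rw [hS₁' y, ENNReal.ofReal_toReal (measure_ne_top _ _)]
  have hIG : ∫ y, G y ∂ν₂ = (P {ω | T₂ ω ≤ T₁ ω}).toReal := by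
    rw [integral_eq_lintegral_of_nonneg_ae (Filter.Eventually.of_forall hG0)
      hantiG.measurable.aestronglyMeasurable]
    congr 1
    rw [hD]
    exact lintegral_congr fun y => by
      rw [hG, ENNReal.ofReal_toReal (measure_ne_top _ _)]
  -- the set-integral over (0,∞) equals the full integral
  have hae : ∀ᵐ x ∂ν₂, x ∈ Set.Ioi (0 : ℝ) := by
    rw [ae_iff]
    have hcompl : {x : ℝ | ¬ x ∈ Set.Ioi (0 : ℝ)} = Set.Iic 0 := by
      ext x; simp [not_lt]
    rw [hcompl, hν₂, Measure.map_apply hT₂ measurableSet_Iic]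
    have : T₂ ⁻¹' Set.Iic 0 = ∅ :=
      Set.eq_empty_iff_forall_notMem.mpr fun ω h =>
        absurd (h : T₂ ω ≤ 0) (not_le.mpr (hpos₂ ω))
    rw [this, measure_empty]
  have hint : ∫ t in Set.Ioi (0 : ℝ), (S₁ t + Function.leftLim S₁ t) / 2 ∂μ₂
      = ((P {ω | T₂ ω < T₁ ω}).toReal + (P {ω | T₂ ω ≤ T₁ ω}).toReal) / 2 := by
    rw [hμν, Measure.restrict_eq_self_of_ae_mem hae]
    simp only [hLL]
    rw [integral_div, integral_add intS₁ intG, hIS₁, hIG]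
  -- probability bookkeeping
  have hU : {ω | T₂ ω ≤ T₁ ω} = {ω | T₂ ω < T₁ ω} ∪ {ω | T₁ ω = T₂ ω} := by
    ext ω
    simp only [Set.mem_setOf_eq, Set.mem_union]
    constructor
    · intro h
      rcases h.lt_or_eq with h' | h'
      · exact Or.inl h'
      · exact Or.inr h'.symm
    · rintro (h | h)
      · exact h.le
      · exact h.ge
  have hdisj : Disjoint {ω | T₂ ω < T₁ ω} {ω | T₁ ω = T₂ ω} :=
    Set.disjoint_left.mpr fun ω ha hb => (ne_of_gt ha) hb
  have h1 : P {ω | T₂ ω ≤ T₁ ω} = P {ω | T₂ ω < T₁ ω} + P {ω | T₁ ω = T₂ ω} := by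
    rw [hU, measure_union hdisj (measurableSet_eq_fun hT₁ hT₂)]
  have h2 : P {ω | T₁ ω < T₂ ω} + P {ω | T₂ ω ≤ T₁ ω} = 1 := by
    have hcompl : {ω | T₁ ω < T₂ ω}ᶜ = {ω | T₂ ω ≤ T₁ ω} := by
      ext ω; simp [not_lt]
    have := measure_add_measure_compl (μ := P) (measurableSet_lt hT₁ hT₂)
    rwa [measure_univ, hcompl] at this
  have hbc : (P {ω | T₂ ω ≤ T₁ ω}).toReal
      = (P {ω | T₂ ω < T₁ ω}).toReal + (P {ω | T₁ ω = T₂ ω}).toReal := by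
    rw [h1, ENNReal.toReal_add (measure_ne_top _ _) (measure_ne_top _ _)]
  have had : (P {ω | T₁ ω < T₂ ω}).toReal + (P {ω | T₂ ω ≤ T₁ ω}).toReal = 1 := by
    rw [← ENNReal.toReal_add (measure_ne_top _ _) (measure_ne_top _ _), h2, ENNReal.toReal_one]
  rw [hint]
  linarith
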